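/- arXiv:2510.07199 — 4 statements merged into one kernel-verified Lean document; each statement's English description precedes it below -/
import Mathlib

section
/- For the Poisson model with smooth prior, the derivative of the posterior mean of η = log x with respect to the (continuously extended) observation y equals the posterior variance of log x: d/dy E[log x | y] = E[(log x)² | y] − (E[log x | y])² = Var[log x | y]. -/
open MeasureTheory Set

/-- digamma function ψ = (log Γ)' -/
noncomputable def digamma (t : ℝ) : ℝ := deriv (fun s => Real.log (Real.Gamma s)) t

/-- Poisson likelihood continuously extended to real observations. -/
noncomputable def plik (x y : ℝ) : ℝ := x ^ y * Real.exp (-x) / Real.Gamma (y + 1)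

/-- marginal density of the observation -/
noncomputable def marg (px : ℝ → ℝ) (t : ℝ) : ℝ := ∫ x in Set.Ioi (0:ℝ), plik x t * px x

/-- posterior expectation E[f(x) | y = t] -/
noncomputable def postExp (px : ℝ → ℝ) (f : ℝ → ℝ) (t : ℝ) : ℝ :=
  (∫ x in Set.Ioi (0:ℝ), f x * plik x t * px x) / marg px t

/-- k-th posterior central moment of log x -/
noncomputable def cmom (px : ℝ → ℝ) (k : ℕ) (t : ℝ) : ℝ :=
  (∫ x in Set.Ioi (0:ℝ), (Real.log x - postExp px Real.log t) ^ k * plik x t * px x) / marg px t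


/-- The derivative of the posterior mean of log x with respect to the
continuously extended observation equals the posterior variance of log x. -/
theorem poisson_posterior_mean_deriv_eq_variance (px : ℝ → ℝ)
    (hnn : ∀ x ∈ Set.Ioi (0:ℝ), 0 ≤ px x)
    (y : ℝ) (hy : -1 < y)
    (hpos : 0 < marg px y)
    (hint0 : IntegrableOn (fun x => plik x y * px x) (Set.Ioi 0))
    (hint1 : IntegrableOn (fun x => Real.log x * plik x y * px x) (Set.Ioi 0))
    (hint2 : IntegrableOn (fun x => (Real.log x) ^ 2 * plik x y * px x) (Set.Ioi 0))
    -- differentiation under the integral sign for the marginal: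
    (hmargD : HasDerivAt (marg px)
      (∫ x in Set.Ioi (0:ℝ), (Real.log x - digamma (y + 1)) * plik x y * px x) y)
    -- differentiation under the integral sign for the numerator:
    (hND : HasDerivAt (fun t => ∫ x in Set.Ioi (0:ℝ), Real.log x * plik x t * px x)
      (∫ x in Set.Ioi (0:ℝ),
        Real.log x * (Real.log x - digamma (y + 1)) * plik x y * px x) y) :
    HasDerivAt (postExp px Real.log)
      (postExp px (fun x => (Real.log x) ^ 2) y - (postExp px Real.log y) ^ 2) y ∧
    postExp px (fun x => (Real.log x) ^ 2) y - (postExp px Real.log y) ^ 2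
      = cmom px 2 y := by
  set ψ := digamma (y + 1) with hψ
  set S0 := marg px y with hS0
  set S1 := ∫ x in Set.Ioi (0:ℝ), Real.log x * plik x y * px x with hS1
  set S2 := ∫ x in Set.Ioi (0:ℝ), (Real.log x) ^ 2 * plik x y * px x with hS2
  have hm : S0 ≠ 0 := ne_of_gt hpos
  -- rewrite the marginal derivative integral
  have hM' : (∫ x in Set.Ioi (0:ℝ), (Real.log x - ψ) * plik x y * px x)
      = S1 - ψ * S0 := by
    have h : (fun x => (Real.log x - ψ) * plik x y * px x)
        = fun x => Real.log x * plik x y * px x - ψ * (plik x y * px x) := by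
      funext x; ring
    rw [h, integral_sub hint1 (hint0.const_mul ψ), integral_const_mul]
    rfl
  have hN' : (∫ x in Set.Ioi (0:ℝ), Real.log x * (Real.log x - ψ) * plik x y * px x)
      = S2 - ψ * S1 := by
    have h : (fun x => Real.log x * (Real.log x - ψ) * plik x y * px x)
        = fun x => (Real.log x) ^ 2 * plik x y * px x
            - ψ * (Real.log x * plik x y * px x) := by
      funext x; ring
    rw [h, integral_sub hint2 (hint1.const_mul ψ), integral_const_mul]
  rw [hM'] at hmargD
  rw [hN'] at hND
  have hE2 : postExp px (fun x => (Real.log x) ^ 2) y = S2 / S0 := rfl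
  have hE1 : postExp px Real.log y = S1 / S0 := rfl
  have hD := hND.div hmargD hm
  constructor
  · have heq : ((S2 - ψ * S1) * S0 - S1 * (S1 - ψ * S0)) / S0 ^ 2
        = S2 / S0 - (S1 / S0) ^ 2 := by
      field_simp; ring
    rw [hE2, hE1]
    have : postExp px Real.log = fun t =>
        (∫ x in Set.Ioi (0:ℝ), Real.log x * plik x t * px x) / marg px t := rfl
    rw [this, ← heq]
    exact hD
  · unfold cmom
    rw [hE1]
    set μ := S1 / S0 with hμ
    have h : (fun x => (Real.log x - μ) ^ 2 * plik x y * px x)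
        = fun x => ((Real.log x) ^ 2 * plik x y * px x
            - (2 * μ) * (Real.log x * plik x y * px x))
            + μ ^ 2 * (plik x y * px x) := by
      funext x
      ring
    have hfg : IntegrableOn (fun x => (Real.log x) ^ 2 * plik x y * px x
        - 2 * μ * (Real.log x * plik x y * px x)) (Set.Ioi 0) :=
      hint2.sub (hint1.const_mul (2 * μ))
    rw [h, integral_add hfg (hint0.const_mul (μ ^ 2)),
      integral_sub hint2 (hint1.const_mul (2 * μ)), integral_const_mul, integral_const_mul]
    have hmarg : (∫ x in Set.Ioi (0:ℝ), plik x y * px x) = S0 := rfl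
    rw [hmarg, hE2, ← hS0, ← hS1, ← hS2]
    rw [hμ]; field_simp
    ring
end

section
/- For the Poisson model, the derivative of the posterior variance of η = log x equals the posterior third central moment: d/dy μ₂(y) = μ₃(y), where μ_k(y) = E[(log x − μ₁(y))^k | y]. -/
open MeasureTheory Set

lemma plik_nonneg {x : ℝ} (hx : 0 < x) {y : ℝ} (hy : -1 < y) : 0 ≤ plik x y := by
  have hΓ : 0 < Real.Gamma (y + 1) := Real.Gamma_pos_of_pos (by linarith)
  unfold plik
  positivity

lemma plik_hasDerivAt {x : ℝ} (hx : 0 < x) {y : ℝ} (hy : -1 < y) :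
    HasDerivAt (fun s => plik x s) (plik x y * (Real.log x - digamma (y + 1))) y := by
  have hΓpos : 0 < Real.Gamma (y + 1) := Real.Gamma_pos_of_pos (by linarith)
  have hΓdiff : DifferentiableAt ℝ Real.Gamma (y + 1) := by
    apply Real.differentiableAt_Gamma
    intro m
    have : (0:ℝ) < y + 1 := by linarith
    have hm : -(m:ℝ) ≤ 0 := neg_nonpos.mpr (Nat.cast_nonneg m)
    intro h; rw [h] at this; linarith
  set d := deriv Real.Gamma (y + 1) with hd
  have hΓ : HasDerivAt Real.Gamma d (y + 1) := hΓdiff.hasDerivAt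
  have hψ : digamma (y + 1) = d / Real.Gamma (y + 1) := by
    have h1 : HasDerivAt (fun s => Real.log (Real.Gamma s)) (d / Real.Gamma (y + 1)) (y + 1) :=
      hΓ.log hΓpos.ne'
    rw [digamma, h1.deriv]
  have hΓc : HasDerivAt (fun s => Real.Gamma (s + 1)) d y := by
    have := hΓ.comp y ((hasDerivAt_id y).add_const 1)
    rw [mul_one] at this; exact this
  have hnum : HasDerivAt (fun s => x ^ s * Real.exp (-x))
      (x ^ y * Real.log x * Real.exp (-x)) y :=
    ((Real.hasStrictDerivAt_const_rpow hx y).hasDerivAt).mul_const _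
  have := hnum.div hΓc hΓpos.ne'
  refine HasDerivAt.congr_deriv this ?_
  rw [hψ, plik]
  field_simp

lemma integ_aux (px : ℝ → ℝ) (hnn : ∀ x ∈ Set.Ioi (0:ℝ), 0 ≤ px x) {y : ℝ} (hy : -1 < y)
    (hint : ∀ k : ℕ, IntegrableOn (fun x => |Real.log x| ^ k * plik x y * px x) (Set.Ioi 0))
    (g : ℝ → ℝ) (hg : Measurable g) (C : ℝ)
    (hC : ∀ x ∈ Set.Ioi (0:ℝ), |g x| ≤ C * (1 + |Real.log x|) ^ 3) :
    IntegrableOn (fun x => g x * plik x y * px x) (Set.Ioi 0) := by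
  have hw : AEStronglyMeasurable (fun x => plik x y * px x)
      (MeasureTheory.volume.restrict (Set.Ioi 0)) := by
    have := (hint 0).aestronglyMeasurable
    simpa using this
  have hG : IntegrableOn (fun x => (1 + |Real.log x|) ^ 3 * plik x y * px x) (Set.Ioi 0) := by
    have hsum : IntegrableOn (fun x => ((|Real.log x| ^ 0 * plik x y * px x)
        + 3 * (|Real.log x| ^ 1 * plik x y * px x))
        + (3 * (|Real.log x| ^ 2 * plik x y * px x)
        + (|Real.log x| ^ 3 * plik x y * px x))) (Set.Ioi 0) :=
      ((hint 0).add ((hint 1).const_mul 3)).add (((hint 2).const_mul 3).add (hint 3))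
    have heq : (fun x : ℝ => (1 + |Real.log x|) ^ 3 * plik x y * px x)
        = fun x => ((|Real.log x| ^ 0 * plik x y * px x)
        + 3 * (|Real.log x| ^ 1 * plik x y * px x))
        + (3 * (|Real.log x| ^ 2 * plik x y * px x)
        + (|Real.log x| ^ 3 * plik x y * px x)) := by
      funext x; ring
    rw [heq]; exact hsum
  apply Integrable.mono' (hG.const_mul C)
  · have := hg.aestronglyMeasurable.mul hw
    simp only [mul_assoc]; exact this
  · filter_upwards [ae_restrict_mem measurableSet_Ioi] with x hx
    have h1 : 0 ≤ plik x y := plik_nonneg hx hy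
    have h2 : 0 ≤ px x := hnn x hx
    have hnorm : ‖g x * plik x y * px x‖ = |g x| * (plik x y * px x) := by
      rw [Real.norm_eq_abs, abs_mul, abs_mul, abs_of_nonneg h1, abs_of_nonneg h2, mul_assoc]
    rw [hnorm]
    calc |g x| * (plik x y * px x) ≤ (C * (1 + |Real.log x|) ^ 3) * (plik x y * px x) :=
          mul_le_mul_of_nonneg_right (hC x hx) (by positivity)
      _ = C * ((1 + |Real.log x|) ^ 3 * plik x y * px x) := by ring

lemma abs_sub_le' (a b : ℝ) : |a - b| ≤ |a| + |b| := by
  rw [sub_eq_add_neg]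
  exact (abs_add_le a (-b)).trans (by rw [abs_neg])

lemma pow_cube_bound (t A : ℝ) (ht : 0 ≤ t) (hA : 0 ≤ A) {k : ℕ} (hk : k ≤ 3) :
    (t + A) ^ k ≤ (1 + A) ^ 3 * (1 + t) ^ 3 := by
  have h0 : (0:ℝ) ≤ t + A := by linarith
  have h1 : t + A ≤ (1 + A) * (1 + t) := by nlinarith
  have hone : (1:ℝ) ≤ (1 + A) * (1 + t) := by nlinarith
  calc (t + A) ^ k ≤ ((1 + A) * (1 + t)) ^ k := pow_le_pow_left₀ h0 h1 k
    _ ≤ ((1 + A) * (1 + t)) ^ 3 := pow_le_pow_right₀ hone hk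
    _ = (1 + A) ^ 3 * (1 + t) ^ 3 := mul_pow _ _ _

/-- The derivative of the posterior variance of log x equals the posterior
third central moment: d/dy mu_2(y) = mu_3(y). -/
theorem poisson_variance_deriv_eq_third_moment (px : ℝ → ℝ)
    (hnn : ∀ x ∈ Set.Ioi (0:ℝ), 0 ≤ px x)
    (y : ℝ) (hy : -1 < y)
    (hpos : 0 < marg px y)
    (hint : ∀ k : ℕ, IntegrableOn (fun x => |Real.log x| ^ k * plik x y * px x) (Set.Ioi 0))
    -- differentiation under the integral sign for the marginal:
    (hmargD : HasDerivAt (marg px)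
      (∫ x in Set.Ioi (0:ℝ), (Real.log x - digamma (y + 1)) * plik x y * px x) y)
    -- Tweedie consequence: the posterior mean of log x has derivative mu_2:
    (hmu1D : HasDerivAt (postExp px Real.log) (cmom px 2 y) y)
    -- differentiation under the integral sign for the centered second moment:
    (hDUI : HasDerivAt
      (fun s => ∫ x in Set.Ioi (0:ℝ),
        (Real.log x - postExp px Real.log s) ^ 2 * plik x s * px x)
      (∫ x in Set.Ioi (0:ℝ),
        deriv (fun s => (Real.log x - postExp px Real.log s) ^ 2 * plik x s * px x) y) y) :
    HasDerivAt (cmom px 2) (cmom px 3 y) y := by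
  set μ1 := postExp px Real.log y with hμ1
  set c := cmom px 2 y with hc
  set ψ := digamma (y + 1) with hψ
  set m := marg px y with hm
  -- integrability of the various pieces
  have hI0 : IntegrableOn (fun x => plik x y * px x) (Set.Ioi 0) := by
    have := hint 0; simpa using this
  have hIL : IntegrableOn (fun x => Real.log x * plik x y * px x) (Set.Ioi 0) := by
    refine integ_aux px hnn hy hint _ Real.measurable_log ((1 + (0:ℝ)) ^ 3) (fun x hx => ?_)
    have := pow_cube_bound (|Real.log x|) 0 (abs_nonneg _) le_rfl (k := 1) (by norm_num)
    simpa using this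
  have hI1 : IntegrableOn (fun x => (Real.log x - μ1) * plik x y * px x) (Set.Ioi 0) := by
    refine integ_aux px hnn hy hint _ (Real.measurable_log.sub measurable_const)
      ((1 + |μ1|) ^ 3) (fun x hx => ?_)
    calc |Real.log x - μ1| ≤ |Real.log x| + |μ1| := abs_sub_le' _ _
      _ = (|Real.log x| + |μ1|) ^ 1 := (pow_one _).symm
      _ ≤ (1 + |μ1|) ^ 3 * (1 + |Real.log x|) ^ 3 := by
          have := pow_cube_bound (|Real.log x|) (|μ1|) (abs_nonneg _) (abs_nonneg _)
            (k := 1) (by norm_num)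
          linarith
  have hI2 : IntegrableOn (fun x => (Real.log x - μ1) ^ 2 * plik x y * px x) (Set.Ioi 0) := by
    refine integ_aux px hnn hy hint _ ((Real.measurable_log.sub measurable_const).pow_const 2)
      ((1 + |μ1|) ^ 3) (fun x hx => ?_)
    calc |(Real.log x - μ1) ^ 2| = |Real.log x - μ1| ^ 2 := by rw [abs_pow]
      _ ≤ (|Real.log x| + |μ1|) ^ 2 := pow_le_pow_left₀ (abs_nonneg _) (abs_sub_le' _ _) 2
      _ ≤ (1 + |μ1|) ^ 3 * (1 + |Real.log x|) ^ 3 :=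
          pow_cube_bound _ _ (abs_nonneg _) (abs_nonneg _) (by norm_num)
  have hI3 : IntegrableOn (fun x => (Real.log x - μ1) ^ 3 * plik x y * px x) (Set.Ioi 0) := by
    refine integ_aux px hnn hy hint _ ((Real.measurable_log.sub measurable_const).pow_const 3)
      ((1 + |μ1|) ^ 3) (fun x hx => ?_)
    calc |(Real.log x - μ1) ^ 3| = |Real.log x - μ1| ^ 3 := by rw [abs_pow]
      _ ≤ (|Real.log x| + |μ1|) ^ 3 := pow_le_pow_left₀ (abs_nonneg _) (abs_sub_le' _ _) 3
      _ ≤ (1 + |μ1|) ^ 3 * (1 + |Real.log x|) ^ 3 :=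
          pow_cube_bound _ _ (abs_nonneg _) (abs_nonneg _) le_rfl
  -- basic moment identities
  have hmne : m ≠ 0 := hpos.ne'
  have hEL : (∫ x in Set.Ioi (0:ℝ), Real.log x * plik x y * px x) = μ1 * m := by
    rw [hμ1, postExp, div_mul_cancel₀ _ hmne]
  have hJ1 : (∫ x in Set.Ioi (0:ℝ), (Real.log x - μ1) * plik x y * px x) = 0 := by
    have heq : (fun x : ℝ => (Real.log x - μ1) * plik x y * px x)
        = fun x => Real.log x * plik x y * px x - μ1 * (plik x y * px x) := by
      funext x; ring
    rw [heq, integral_sub hIL (hI0.const_mul μ1), integral_const_mul, hEL]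
    have : (∫ x in Set.Ioi (0:ℝ), plik x y * px x) = m := rfl
    rw [this]; ring
  have hJ2 : (∫ x in Set.Ioi (0:ℝ), (Real.log x - μ1) ^ 2 * plik x y * px x) = c * m := by
    rw [hc, cmom, div_mul_cancel₀ _ hmne]
  have hJ3 : (∫ x in Set.Ioi (0:ℝ), (Real.log x - μ1) ^ 3 * plik x y * px x)
      = cmom px 3 y * m := by
    rw [cmom, div_mul_cancel₀ _ hmne]
  -- the marginal derivative equals (μ1 - ψ) * m
  have hmargD' : HasDerivAt (marg px) ((μ1 - ψ) * m) y := by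
    have hD : (∫ x in Set.Ioi (0:ℝ), (Real.log x - digamma (y + 1)) * plik x y * px x)
        = (μ1 - ψ) * m := by
      have heq : (fun x : ℝ => (Real.log x - digamma (y + 1)) * plik x y * px x)
          = fun x => Real.log x * plik x y * px x - ψ * (plik x y * px x) := by
        funext x; rw [hψ]; ring
      rw [heq, integral_sub hIL (hI0.const_mul ψ), integral_const_mul, hEL]
      have : (∫ x in Set.Ioi (0:ℝ), plik x y * px x) = m := rfl
      rw [this]; ring
    rw [← hD]; exact hmargD
  -- evaluate the derivative of the numerator
  have hN : HasDerivAt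
      (fun s => ∫ x in Set.Ioi (0:ℝ),
        (Real.log x - postExp px Real.log s) ^ 2 * plik x s * px x)
      (cmom px 3 y * m + (μ1 - ψ) * (c * m)) y := by
    have hEq : (∫ x in Set.Ioi (0:ℝ),
        deriv (fun s => (Real.log x - postExp px Real.log s) ^ 2 * plik x s * px x) y)
        = cmom px 3 y * m + (μ1 - ψ) * (c * m) := by
      have hcong : ∀ x ∈ Set.Ioi (0:ℝ),
          deriv (fun s => (Real.log x - postExp px Real.log s) ^ 2 * plik x s * px x) y
          = ((Real.log x - μ1) ^ 3 * plik x y * px x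
            + (μ1 - ψ) * ((Real.log x - μ1) ^ 2 * plik x y * px x))
            + (-2 * c) * ((Real.log x - μ1) * plik x y * px x) := by
        intro x hx
        have hp := plik_hasDerivAt hx hy
        have h1 : HasDerivAt (fun s => (Real.log x - postExp px Real.log s) ^ 2)
            (((2:ℕ):ℝ) * (Real.log x - μ1) ^ (2 - 1) * (-c)) y :=
          (hmu1D.const_sub (Real.log x)).pow 2
        have h2 : HasDerivAt
            (fun s => (Real.log x - postExp px Real.log s) ^ 2 * plik x s * px x) _ y :=
          (h1.mul hp).mul_const (px x)
        rw [h2.deriv]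
        push_cast
        ring
      have hT2 : IntegrableOn
          (fun x => (μ1 - ψ) * ((Real.log x - μ1) ^ 2 * plik x y * px x)) (Set.Ioi 0) :=
        hI2.const_mul _
      have hT3 : IntegrableOn
          (fun x => (-2 * c) * ((Real.log x - μ1) * plik x y * px x)) (Set.Ioi 0) :=
        hI1.const_mul _
      have hT23 : IntegrableOn (fun x => (Real.log x - μ1) ^ 3 * plik x y * px x
          + (μ1 - ψ) * ((Real.log x - μ1) ^ 2 * plik x y * px x)) (Set.Ioi 0) :=
        hI3.add hT2
      rw [setIntegral_congr_fun measurableSet_Ioi hcong,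
        integral_add hT23 hT3, integral_add hI3 hT2,
        integral_const_mul, integral_const_mul, hJ1, hJ2, hJ3]
      ring
    rw [← hEq]; exact hDUI
  -- assemble via the quotient rule
  have hdiv := hN.div hmargD' hmne
  have hval : ((cmom px 3 y * m + (μ1 - ψ) * (c * m)) * marg px y
      - (∫ x in Set.Ioi (0:ℝ), (Real.log x - postExp px Real.log y) ^ 2 * plik x y * px x)
        * ((μ1 - ψ) * m)) / marg px y ^ 2 = cmom px 3 y := by
    rw [hJ2, ← hm]
    field_simp
    ring
  rw [hval] at hdiv
  exact hdiv
end

section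
/- In the Gaussian case with y = x + n, n ~ N(0, σ²I), Tweedie's formula gives E[x|y] = y + σ² ∇_y log p_y(y); in the Poisson case the analogous identity holds for the canonical parameter η = log x rather than x itself: E[log x | y] = ψ(y+1) + d/dy log p_y(y). As a corollary, in the Poisson model d/dy E[log x|y] − ψ'(y+1) = d²/dy² log p_y(y). -/
open MeasureTheory Set

/-- trigamma function (derivative of digamma) -/
noncomputable def trigamma (t : ℝ) : ℝ := deriv digamma t

/-- Gaussian kernel for noise variance sigma^2 -/
noncomputable def gaussK (σ t x : ℝ) : ℝ :=
  Real.exp (-(t - x) ^ 2 / (2 * σ ^ 2)) / Real.sqrt (2 * Real.pi * σ ^ 2)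

/-- Gaussian marginal density -/
noncomputable def gmarg (σ : ℝ) (q : ℝ → ℝ) (t : ℝ) : ℝ := ∫ x : ℝ, gaussK σ t x * q x

/-- Tweedie's formula: in the Gaussian case `E[x|y] = y + σ² (log p_y)'(y)`;
in the Poisson case the analogous identity holds for the canonical parameter
`η = log x`: `E[log x|y] = ψ(y+1) + (log p_y)'(y)`.  As a corollary, in the
Poisson model `(E[log x|·])'(y) − ψ'(y+1) = (log p_y)''(y)`. -/
theorem tweedie_gaussian_and_poisson
    -- Gaussian setting
    (σ : ℝ) (hσ : 0 < σ) (q : ℝ → ℝ)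
    (hq : ∀ x : ℝ, 0 ≤ q x)
    (yg : ℝ) (hgpos : 0 < gmarg σ q yg)
    (hgint : Integrable (fun x => x * gaussK σ yg x * q x))
    -- differentiation under the integral sign for the Gaussian marginal:
    (hgD : HasDerivAt (gmarg σ q)
      (∫ x : ℝ, ((x - yg) / σ ^ 2) * gaussK σ yg x * q x) yg)
    -- Poisson setting
    (px : ℝ → ℝ) (hnn : ∀ x ∈ Set.Ioi (0:ℝ), 0 ≤ px x)
    (y : ℝ) (hy : -1 < y)
    (hpos : ∀ t : ℝ, -1 < t → 0 < marg px t)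
    (hint : ∀ t : ℝ, -1 < t →
      IntegrableOn (fun x => Real.log x * plik x t * px x) (Set.Ioi 0))
    -- differentiation under the integral sign for the Poisson marginal:
    (hmargD : ∀ t : ℝ, -1 < t → HasDerivAt (marg px)
      (∫ x in Set.Ioi (0:ℝ), (Real.log x - digamma (t + 1)) * plik x t * px x) t)
    -- regularity for the corollary:
    (hmu1D : DifferentiableAt ℝ (postExp px Real.log) y)
    (hψD : DifferentiableAt ℝ digamma (y + 1)) :
    -- Gaussian Tweedie formula
    (∫ x : ℝ, x * gaussK σ yg x * q x) / gmarg σ q yg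
      = yg + σ ^ 2 * deriv (fun t => Real.log (gmarg σ q t)) yg ∧
    -- Poisson Tweedie formula in the canonical (log) domain
    postExp px Real.log y
      = digamma (y + 1) + deriv (fun t => Real.log (marg px t)) y ∧
    -- corollary: second-derivative identity in the Poisson model
    deriv (postExp px Real.log) y - trigamma (y + 1)
      = deriv (deriv (fun t => Real.log (marg px t))) y := by
  -- Gaussian part
  have hm0 : gmarg σ q yg ≠ 0 := ne_of_gt hgpos
  have hσ2 : (σ:ℝ)^2 ≠ 0 := pow_ne_zero _ (ne_of_gt hσ)
  have hKq : Integrable (fun x => gaussK σ yg x * q x) := by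
    by_contra h
    rw [gmarg, integral_undef h] at hgpos
    exact lt_irrefl 0 hgpos
  have hDval : (∫ x : ℝ, ((x - yg) / σ ^ 2) * gaussK σ yg x * q x)
      = (σ^2)⁻¹ * (∫ x : ℝ, x * gaussK σ yg x * q x)
        - (yg / σ^2) * gmarg σ q yg := by
    have hfun : (fun x : ℝ => ((x - yg) / σ ^ 2) * gaussK σ yg x * q x)
        = fun x : ℝ => (σ^2)⁻¹ * (x * gaussK σ yg x * q x)
          - (yg / σ^2) * (gaussK σ yg x * q x) := by
      funext x; field_simp
    rw [hfun, integral_sub (hgint.const_mul _) (hKq.const_mul _),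
      integral_const_mul, integral_const_mul, gmarg]
  have hlogD : HasDerivAt (fun t => Real.log (gmarg σ q t))
      ((∫ x : ℝ, ((x - yg) / σ ^ 2) * gaussK σ yg x * q x) / gmarg σ q yg) yg :=
    hgD.log hm0
  have hG : (∫ x : ℝ, x * gaussK σ yg x * q x) / gmarg σ q yg
      = yg + σ ^ 2 * deriv (fun t => Real.log (gmarg σ q t)) yg := by
    rw [hlogD.deriv, hDval]
    field_simp
    ring
  -- Poisson part
  have hpm : ∀ t : ℝ, -1 < t → IntegrableOn (fun x => plik x t * px x) (Set.Ioi 0) := by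
    intro t ht
    by_contra h
    have := hpos t ht
    rw [marg, integral_undef h] at this
    exact lt_irrefl 0 this
  have hGderiv : ∀ t : ℝ, -1 < t → HasDerivAt (fun s => Real.log (marg px s))
      (postExp px Real.log t - digamma (t + 1)) t := by
    intro t ht
    have hmt0 : marg px t ≠ 0 := ne_of_gt (hpos t ht)
    have hD := (hmargD t ht).log hmt0
    have hsplit : (∫ x in Set.Ioi (0:ℝ), (Real.log x - digamma (t + 1)) * plik x t * px x)
        = (∫ x in Set.Ioi (0:ℝ), Real.log x * plik x t * px x)
          - digamma (t + 1) * marg px t := by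
      have hfun : (fun x : ℝ => (Real.log x - digamma (t + 1)) * plik x t * px x)
          = fun x : ℝ => Real.log x * plik x t * px x
            - digamma (t + 1) * (plik x t * px x) := by
        funext x; ring
      rw [hfun, integral_sub (hint t ht) ((hpm t ht).const_mul _),
        integral_const_mul, marg]
    rw [hsplit] at hD
    have : (((∫ x in Set.Ioi (0:ℝ), Real.log x * plik x t * px x)
        - digamma (t + 1) * marg px t) / marg px t)
        = postExp px Real.log t - digamma (t + 1) := by
      rw [sub_div, mul_div_assoc, div_self hmt0, mul_one, postExp]
    rwa [this] at hD
  have hP1 : postExp px Real.log y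
      = digamma (y + 1) + deriv (fun t => Real.log (marg px t)) y := by
    rw [(hGderiv y hy).deriv]
    ring
  -- corollary
  have hEq : deriv (fun t => Real.log (marg px t))
      =ᶠ[nhds y] fun t => postExp px Real.log t - digamma (t + 1) := by
    filter_upwards [isOpen_Ioi.mem_nhds (show y ∈ Set.Ioi (-1:ℝ) from hy)] with t ht
    exact (hGderiv t ht).deriv
  have hψ' : HasDerivAt (fun t => digamma (t + 1)) (trigamma (y + 1)) y := by
    have h1 : HasDerivAt (fun t : ℝ => t + 1) 1 y := (hasDerivAt_id y).add_const 1
    have := (hψD.hasDerivAt.comp y h1)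
    simpa [trigamma, Function.comp_def] using this
  have hP2 : deriv (postExp px Real.log) y - trigamma (y + 1)
      = deriv (deriv (fun t => Real.log (marg px t))) y := by
    rw [hEq.deriv_eq, deriv_fun_sub hmu1D hψ'.differentiableAt, hψ'.deriv]
  exact ⟨hG, hP1, hP2⟩
end

section
/- Combining the first two moment identities: the posterior variance of log x in the Poisson model equals ψ'(y+1) + d²/dy² log p_y(y), where ψ' is the trigamma function; in particular, since variance is nonnegative, d²/dy² log p_y(y) ≥ −ψ'(y+1) for all y. -/
open MeasureTheory Set

lemma abs_log_le_aux {u : ℝ} (hu : 0 < u) : |Real.log u| ≤ u + u⁻¹ := by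
  have hinv : 0 < u⁻¹ := inv_pos.2 hu
  rcases le_or_gt 0 (Real.log u) with h | h
  · rw [abs_of_nonneg h]
    have := Real.log_le_sub_one_of_pos hu
    linarith
  · rw [abs_of_neg h]
    have h2 : Real.log u⁻¹ ≤ u⁻¹ - 1 := Real.log_le_sub_one_of_pos hinv
    rw [Real.log_inv] at h2
    linarith

lemma abs_log_le_rpow {x δ : ℝ} (hx : 0 < x) (hδ : 0 < δ) :
    |Real.log x| ≤ (x ^ δ + x ^ (-δ)) / δ := by
  rw [le_div_iff₀ hδ]
  have h1 : Real.log (x ^ δ) = δ * Real.log x := Real.log_rpow hx δ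
  have h2 := abs_log_le_aux (Real.rpow_pos_of_pos hx δ)
  rw [h1, abs_mul, abs_of_pos hδ] at h2
  rw [Real.rpow_neg hx.le]
  linarith [h2]

lemma plik_pos {x t : ℝ} (hx : 0 < x) (ht : -1 < t) : 0 < plik x t := by
  unfold plik
  have hΓ : 0 < Real.Gamma (t + 1) := Real.Gamma_pos_of_pos (by linarith)
  positivity

/-- The posterior variance of log x in the Poisson model equals
trigamma(y+1) + (log p_y)''(y); in particular (log p_y)''(y) >= -trigamma(y+1). -/
theorem poisson_posterior_variance_trigamma (px : ℝ → ℝ)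
    (hnn : ∀ x ∈ Set.Ioi (0:ℝ), 0 ≤ px x)
    (y : ℝ) (hy : -1 < y)
    (hpos : ∀ t : ℝ, -1 < t → 0 < marg px t)
    (hint0 : IntegrableOn (fun x => plik x y * px x) (Set.Ioi 0))
    (hint1 : IntegrableOn (fun x => Real.log x * plik x y * px x) (Set.Ioi 0))
    (hint2 : IntegrableOn (fun x => (Real.log x) ^ 2 * plik x y * px x) (Set.Ioi 0))
    -- differentiation under the integral sign for the marginal, at every point:
    (hmargD : ∀ t : ℝ, -1 < t → HasDerivAt (marg px)
      (∫ x in Set.Ioi (0:ℝ), (Real.log x - digamma (t + 1)) * plik x t * px x) t)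
    -- differentiation under the integral sign for the numerator of mu_1:
    (hND : ∀ t : ℝ, -1 < t →
      HasDerivAt (fun s => ∫ x in Set.Ioi (0:ℝ), Real.log x * plik x s * px x)
      (∫ x in Set.Ioi (0:ℝ),
        Real.log x * (Real.log x - digamma (t + 1)) * plik x t * px x) t)
    -- second differentiation of the log-marginal is valid:
    (h2 : DifferentiableAt ℝ (deriv (fun t => Real.log (marg px t))) y)
    (hψ : DifferentiableAt ℝ digamma (y + 1)) :
    postExp px (fun x => (Real.log x) ^ 2) y - (postExp px Real.log y) ^ 2
      = trigamma (y + 1) + deriv (deriv (fun t => Real.log (marg px t))) y ∧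
    deriv (deriv (fun t => Real.log (marg px t))) y ≥ -trigamma (y + 1) := by
  -- integrability of the marginal integrand at every t > -1
  have hIntAll : ∀ t : ℝ, -1 < t → IntegrableOn (fun x => plik x t * px x) (Set.Ioi 0) := by
    intro t ht
    by_contra hc
    have h0 : marg px t = 0 := integral_undef hc
    exact absurd h0 (hpos t ht).ne'
  -- integrability of log x * plik x t * px x at every t > -1
  have hLogInt : ∀ t : ℝ, -1 < t →
      IntegrableOn (fun x => Real.log x * plik x t * px x) (Set.Ioi 0) := by
    intro t ht
    set δ : ℝ := (t + 1) / 2 with hδdef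
    have hδ : 0 < δ := by simp [hδdef]; linarith
    have ht1 : -1 < t + δ := by linarith
    have ht2 : -1 < t - δ := by simp [hδdef]; linarith
    have hΓ : 0 < Real.Gamma (t + 1) := Real.Gamma_pos_of_pos (by linarith)
    have hΓ1 : 0 < Real.Gamma (t + δ + 1) := Real.Gamma_pos_of_pos (by linarith)
    have hΓ2 : 0 < Real.Gamma (t - δ + 1) := Real.Gamma_pos_of_pos (by linarith)
    set c1 : ℝ := Real.Gamma (t + δ + 1) / (δ * Real.Gamma (t + 1))
    set c2 : ℝ := Real.Gamma (t - δ + 1) / (δ * Real.Gamma (t + 1))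
    have hg : IntegrableOn
        (fun x => c1 * (plik x (t + δ) * px x) + c2 * (plik x (t - δ) * px x))
        (Set.Ioi 0) :=
      ((hIntAll _ ht1).const_mul c1).add ((hIntAll _ ht2).const_mul c2)
    have hm : AEStronglyMeasurable (fun x => Real.log x * plik x t * px x)
        (volume.restrict (Set.Ioi 0)) := by
      have := (Real.measurable_log.aestronglyMeasurable
          (μ := volume.restrict (Set.Ioi (0:ℝ)))).mul (hIntAll t ht).aestronglyMeasurable
      simpa [mul_assoc, Pi.mul_def] using this
    refine hg.mono' hm ?_
    rw [ae_restrict_iff' measurableSet_Ioi]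
    refine ae_of_all _ (fun x hx => ?_)
    have hx' : (0:ℝ) < x := hx
    have hpx := hnn x hx
    have hpl : 0 ≤ plik x t := (plik_pos hx' ht).le
    have key : |Real.log x| * plik x t ≤ c1 * plik x (t + δ) + c2 * plik x (t - δ) := by
      have hb := abs_log_le_rpow hx' hδ
      have hp : 0 ≤ x ^ t * Real.exp (-x) / Real.Gamma (t + 1) := by positivity
      have hmul := mul_le_mul_of_nonneg_right hb hp
      have e1 : c1 * plik x (t + δ) = x ^ t * x ^ δ * Real.exp (-x) / (δ * Real.Gamma (t + 1)) := by
        simp only [plik, c1, Real.rpow_add hx']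
        field_simp
      have e2 : c2 * plik x (t - δ) = x ^ t * x ^ (-δ) * Real.exp (-x) / (δ * Real.Gamma (t + 1)) := by
        have : x ^ (t - δ) = x ^ t * x ^ (-δ) := by
          rw [← Real.rpow_add hx']; ring_nf
        simp only [plik, c2, this]
        field_simp
      calc |Real.log x| * plik x t
          = |Real.log x| * (x ^ t * Real.exp (-x) / Real.Gamma (t + 1)) := by rfl
        _ ≤ (x ^ δ + x ^ (-δ)) / δ * (x ^ t * Real.exp (-x) / Real.Gamma (t + 1)) := hmul
        _ = x ^ t * x ^ δ * Real.exp (-x) / (δ * Real.Gamma (t + 1))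
            + x ^ t * x ^ (-δ) * Real.exp (-x) / (δ * Real.Gamma (t + 1)) := by
            field_simp
        _ = c1 * plik x (t + δ) + c2 * plik x (t - δ) := by rw [e1, e2]
    calc ‖Real.log x * plik x t * px x‖
        = |Real.log x| * plik x t * px x := by
          rw [Real.norm_eq_abs, abs_mul, abs_mul, abs_of_nonneg hpl, abs_of_nonneg hpx]
      _ ≤ (c1 * plik x (t + δ) + c2 * plik x (t - δ)) * px x :=
          mul_le_mul_of_nonneg_right key hpx
      _ = c1 * (plik x (t + δ) * px x) + c2 * (plik x (t - δ) * px x) := by ring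
  -- splitting the derivative-of-marg integral
  have hGsplit : ∀ t : ℝ, -1 < t →
      (∫ x in Set.Ioi (0:ℝ), (Real.log x - digamma (t + 1)) * plik x t * px x)
        = (∫ x in Set.Ioi (0:ℝ), Real.log x * plik x t * px x)
          - digamma (t + 1) * marg px t := by
    intro t ht
    have hfe : (fun x => (Real.log x - digamma (t + 1)) * plik x t * px x)
        = fun x => Real.log x * plik x t * px x - digamma (t + 1) * (plik x t * px x) := by
      funext x; ring
    rw [hfe, integral_sub (hLogInt t ht) ((hIntAll t ht).const_mul _),
      integral_const_mul]
    rfl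
  set ψ : ℝ := digamma (y + 1)
  set M : ℝ := marg px y with hMdef
  set N1 : ℝ := ∫ x in Set.Ioi (0:ℝ), Real.log x * plik x y * px x with hN1def
  set N2 : ℝ := ∫ x in Set.Ioi (0:ℝ), (Real.log x) ^ 2 * plik x y * px x with hN2def
  have hM : 0 < M := hpos y hy
  -- first-derivative formula for log marg on (-1, ∞)
  set φ : ℝ → ℝ := fun t =>
    (∫ x in Set.Ioi (0:ℝ), Real.log x * plik x t * px x) / marg px t - digamma (t + 1)
    with hφdef
  have hd1 : ∀ t : ℝ, -1 < t → deriv (fun t => Real.log (marg px t)) t = φ t := by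
    intro t ht
    have h := (hmargD t ht).log (hpos t ht).ne'
    rw [h.deriv, hGsplit t ht, sub_div, mul_div_assoc,
      div_self (hpos t ht).ne', mul_one, hφdef]
  have hEq : deriv (fun t => Real.log (marg px t)) =ᶠ[nhds y] φ := by
    filter_upwards [Ioi_mem_nhds hy] with t ht using hd1 t ht
  -- derivative of φ at y
  have hψc : HasDerivAt (fun t => digamma (t + 1)) (trigamma (y + 1)) y := by
    have h0 : HasDerivAt (fun t : ℝ => t + 1) 1 y := (hasDerivAt_id y).add_const 1
    have := hψ.hasDerivAt.comp y h0
    simpa [trigamma, Function.comp_def] using this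
  have hNy := hND y hy
  have hMy := hmargD y hy
  have hdiv := (hNy.div hMy (hpos y hy).ne').sub hψc
  have hd2 : deriv (deriv (fun t => Real.log (marg px t))) y
      = ((∫ x in Set.Ioi (0:ℝ), Real.log x * (Real.log x - ψ) * plik x y * px x) * M
          - N1 * (∫ x in Set.Ioi (0:ℝ), (Real.log x - ψ) * plik x y * px x)) / M ^ 2
        - trigamma (y + 1) := by
    rw [hEq.deriv_eq]
    exact hdiv.deriv
  -- split the two integrals at y
  have hsplitG : (∫ x in Set.Ioi (0:ℝ), (Real.log x - ψ) * plik x y * px x)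
      = N1 - ψ * M := hGsplit y hy
  have hsplitN : (∫ x in Set.Ioi (0:ℝ), Real.log x * (Real.log x - ψ) * plik x y * px x)
      = N2 - ψ * N1 := by
    have hfe : (fun x => Real.log x * (Real.log x - ψ) * plik x y * px x)
        = fun x => (Real.log x) ^ 2 * plik x y * px x
            - ψ * (Real.log x * plik x y * px x) := by
      funext x; ring
    rw [hfe, integral_sub hint2 (hint1.const_mul _), integral_const_mul]
  have hDval : deriv (deriv (fun t => Real.log (marg px t))) y
      = (N2 / M - (N1 / M) ^ 2) - trigamma (y + 1) := by
    rw [hd2, hsplitG, hsplitN]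
    field_simp
    ring
  -- variance is nonneg
  have hvar : 0 ≤ N2 / M - (N1 / M) ^ 2 := by
    set μ : ℝ := N1 / M
    have h0le : 0 ≤ ∫ x in Set.Ioi (0:ℝ), (Real.log x - μ) ^ 2 * plik x y * px x := by
      refine setIntegral_nonneg measurableSet_Ioi (fun x hx => ?_)
      have hx' : (0:ℝ) < x := hx
      exact mul_nonneg (mul_nonneg (sq_nonneg _) (plik_pos hx' hy).le) (hnn x hx)
    have hfe : (fun x => (Real.log x - μ) ^ 2 * plik x y * px x)
        = fun x => ((Real.log x) ^ 2 * plik x y * px x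
            - (2 * μ) * (Real.log x * plik x y * px x))
            + μ ^ 2 * (plik x y * px x) := by
      funext x; ring
    have hI : (∫ x in Set.Ioi (0:ℝ), ((Real.log x) ^ 2 * plik x y * px x
            - (2 * μ) * (Real.log x * plik x y * px x)
            + μ ^ 2 * (plik x y * px x)))
        = N2 - 2 * μ * N1 + μ ^ 2 * M := by
      have hB1 : IntegrableOn (fun x => (Real.log x) ^ 2 * plik x y * px x
          - (2 * μ) * (Real.log x * plik x y * px x)) (Set.Ioi 0) :=
        hint2.sub (hint1.const_mul _)
      have hB2 : IntegrableOn (fun x => μ ^ 2 * (plik x y * px x)) (Set.Ioi 0) :=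
        hint0.const_mul _
      rw [integral_add hB1 hB2, integral_sub hint2 (hint1.const_mul _),
        integral_const_mul, integral_const_mul]
      rfl
    rw [hfe, hI] at h0le
    have hexp : N2 - 2 * μ * N1 + μ ^ 2 * M = (N2 / M - μ ^ 2) * M := by
      have hμ : N1 = μ * M := (div_mul_cancel₀ N1 hM.ne').symm
      rw [sub_mul, div_mul_cancel₀ _ hM.ne', hμ]; ring
    nlinarith [hM]
  have hmain : postExp px (fun x => (Real.log x) ^ 2) y - (postExp px Real.log y) ^ 2
      = trigamma (y + 1) + deriv (deriv (fun t => Real.log (marg px t))) y := by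
    rw [hDval]
    simp only [postExp, ← hN1def, ← hN2def, ← hMdef]
    ring
  refine ⟨hmain, ?_⟩
  rw [hDval]
  linarith
end
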